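/- Let p be a prime, q = p^ν (ν ≥ 1) a power of p, and k a field of characteristic p. Let F = Σ_{i,j,k=0}^{2} a_{ijk} x_i x_j^q x_k^{q^2} ∈ k[x_0,x_1,x_2] with a_{222} = 0, a_{122} = 0 and a_{022} = 1, and set f(x,y) = F(x, y, 1) ∈ k[x,y] (so f = x + a_{202}x^q + a_{212}y^q + a_{002}x^{q+1} + a_{102}x^q y + a_{012}x y^q + a_{112}y^{q+1} + (terms of degree ≥ q^2)). Then there exists a unique formal power series φ(t) ∈ k[[t]] with φ(0) = 0 such that f(φ(t), t) = 0 in k[[t]]; moreover the coefficient of t^j in φ is 0 for 1 ≤ j ≤ q−1, the coefficient of t^q is −a_{212}, and the coefficient of t^{q+1} is −a_{112}. -/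

import Mathlib

namespace LocParam
open PowerSeries

variable {k : Type*} [Field k]

def Ee (q : ℕ) (i j m : Fin 3) : ℕ := ![1,0,0] i + q * ![1,0,0] j + q^2 * ![1,0,0] m
def Ye (q : ℕ) (i j m : Fin 3) : ℕ := ![0,1,0] i + q * ![0,1,0] j + q^2 * ![0,1,0] m

noncomputable def fE (q : ℕ) (b : Fin 3 → Fin 3 → Fin 3 → k) (x : PowerSeries k) :
    PowerSeries k :=
  x + ∑ i : Fin 3, ∑ j : Fin 3, ∑ m : Fin 3,
    PowerSeries.C (b i j m) * x ^ (Ee q i j m) * X ^ (Ye q i j m)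

def Good (q : ℕ) (b : Fin 3 → Fin 3 → Fin 3 → k) : Prop :=
  ∀ i j m, b i j m = 0 ∨ Ee q i j m = 0 ∨
    (1 ≤ Ee q i j m ∧ q + q ≤ q * Ee q i j m + Ye q i j m)

variable {q : ℕ} {b : Fin 3 → Fin 3 → Fin 3 → k}

lemma dvd_pow_sub_pow (α β : PowerSeries k) (hα : X ∣ α) (hβ : X ∣ β) (c : ℕ)
    (h : X ^ c ∣ α - β) (n : ℕ) : X ^ (c + (n - 1)) ∣ α ^ n - β ^ n := by
  cases n with
  | zero => simp
  | succ n =>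
    rw [← geom_sum₂_mul]
    have h1 : (X : PowerSeries k) ^ n ∣ ∑ i ∈ Finset.range (n+1), α ^ i * β ^ (n - i) := by
      refine Finset.dvd_sum fun i hi => ?_
      have hi' : i ≤ n := Nat.lt_succ_iff.mp (Finset.mem_range.mp hi)
      have : (X : PowerSeries k) ^ i * X ^ (n - i) ∣ α ^ i * β ^ (n - i) :=
        mul_dvd_mul (pow_dvd_pow_of_dvd hα i) (pow_dvd_pow_of_dvd hβ _)
      rwa [← pow_add, Nat.add_sub_cancel' hi'] at this
    have := mul_dvd_mul h1 h
    rw [← pow_add] at this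
    simpa [Nat.add_comm, Nat.add_sub_cancel] using this

lemma lip (hq2 : 2 ≤ q) (hgood : Good q b) (α β : PowerSeries k)
    (hα : X ∣ α) (hβ : X ∣ β) (c : ℕ) (hc : X ^ c ∣ α - β) :
    X ^ (c + 1) ∣ (fE q b α - fE q b β - (α - β)) := by
  have key : fE q b α - fE q b β - (α - β) =
      ∑ i : Fin 3, ∑ j : Fin 3, ∑ m : Fin 3,
        PowerSeries.C (b i j m) *
          ((α ^ (Ee q i j m) - β ^ (Ee q i j m)) * X ^ (Ye q i j m)) := by
    simp only [fE]
    rw [show ∀ x y s t : PowerSeries k, (x + s) - (y + t) - (x - y) = s - t from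
      fun _ _ _ _ => by ring, ← Finset.sum_sub_distrib]
    refine Finset.sum_congr rfl fun i _ => ?_
    rw [← Finset.sum_sub_distrib]
    refine Finset.sum_congr rfl fun j _ => ?_
    rw [← Finset.sum_sub_distrib]
    exact Finset.sum_congr rfl fun m _ => by ring
  rw [key]
  refine Finset.dvd_sum fun i _ => Finset.dvd_sum fun j _ => Finset.dvd_sum fun m _ => ?_
  rcases hgood i j m with h | h | ⟨h1, h2⟩
  · simp [h]
  · simp [h]
  · refine Dvd.dvd.mul_left ?_ _
    have hd : X ^ (c + (Ee q i j m - 1) + Ye q i j m) ∣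
        (α ^ (Ee q i j m) - β ^ (Ee q i j m)) * X ^ (Ye q i j m) := by
      rw [pow_add]
      exact mul_dvd_mul (dvd_pow_sub_pow α β hα hβ c hc _) dvd_rfl
    refine dvd_trans (pow_dvd_pow X ?_) hd
    rcases eq_or_lt_of_le h1 with h0 | h0
    · rw [← h0] at h2; omega
    · omega

lemma tail (hq2 : 2 ≤ q) (hgood : Good q b) (φ : PowerSeries k) (h : X ^ q ∣ φ) :
    X ^ (2 * q) ∣ (fE q b φ - φ - fE q b 0) := by
  have key : fE q b φ - φ - fE q b 0 =
      ∑ i : Fin 3, ∑ j : Fin 3, ∑ m : Fin 3,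
        PowerSeries.C (b i j m) *
          ((φ ^ (Ee q i j m) - 0 ^ (Ee q i j m)) * X ^ (Ye q i j m)) := by
    simp only [fE]
    rw [show ∀ x s t : PowerSeries k, (x + s) - x - ((0 : PowerSeries k) + t) = s - t from
      fun _ _ _ => by ring, ← Finset.sum_sub_distrib]
    refine Finset.sum_congr rfl fun i _ => ?_
    rw [← Finset.sum_sub_distrib]
    refine Finset.sum_congr rfl fun j _ => ?_
    rw [← Finset.sum_sub_distrib]
    exact Finset.sum_congr rfl fun m _ => by ring
  rw [key]
  refine Finset.dvd_sum fun i _ => Finset.dvd_sum fun j _ => Finset.dvd_sum fun m _ => ?_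
  rcases hgood i j m with h0 | h0 | ⟨h1, h2⟩
  · simp [h0]
  · simp [h0]
  · refine Dvd.dvd.mul_left ?_ _
    rw [zero_pow (by omega), sub_zero]
    have hd : X ^ (q * Ee q i j m + Ye q i j m) ∣ φ ^ (Ee q i j m) * X ^ (Ye q i j m) := by
      rw [pow_add]
      exact mul_dvd_mul (by rw [pow_mul]; exact pow_dvd_pow_of_dvd h _) dvd_rfl
    exact dvd_trans (pow_dvd_pow X (by omega)) hd

lemma cc_fE (hq2 : 2 ≤ q) (h222 : b 2 2 2 = 0) (ψ : PowerSeries k)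
    (h0 : constantCoeff ψ = 0) : constantCoeff (fE q b ψ) = 0 := by
  have hq0 : q ≠ 0 := by omega
  have hq20 : q ^ 2 ≠ 0 := by positivity
  simp [fE, Ee, Ye, map_sum, h0, Fin.sum_univ_three, h222, zero_pow, hq0, hq20,
    constantCoeff_X]

lemma coeff_g_lt (hq2 : 2 ≤ q) (h222 : b 2 2 2 = 0) (h122 : b 1 2 2 = 0)
    (n : ℕ) (hn : n < q) : coeff n (fE q b 0) = 0 := by
  have hq0 : q ≠ 0 := by omega
  have hq20 : q ^ 2 ≠ 0 := by positivity
  have hqq : q + 2 ≤ q ^ 2 := by nlinarith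
  have e1 : n ≠ q := by omega
  have e2 : n ≠ 1 + q := by omega
  have e3 : n ≠ q ^ 2 := by omega
  have e4 : n ≠ 1 + q ^ 2 := by omega
  have e5 : n ≠ q + q ^ 2 := by omega
  have e6 : n ≠ 1 + q + q ^ 2 := by omega
  by_cases hn0 : n = 0 <;>
  · by_cases hn1 : n = 1 <;>
      simp_all [fE, Ee, Ye, Fin.sum_univ_three, h222, h122, zero_pow,
        coeff_X_pow, coeff_X, coeff_C, coeff_one]

lemma coeff_g_q (hq2 : 2 ≤ q) : coeff q (fE q b 0) = b 2 1 2 := by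
  have hq0 : q ≠ 0 := by omega
  have hq20 : q ^ 2 ≠ 0 := by positivity
  have hqq : q + 2 ≤ q ^ 2 := by nlinarith
  have e1 : q ≠ 1 := by omega
  have e3 : q ≠ q ^ 2 := by omega
  have e4 : q ≠ 1 + q ^ 2 := by omega
  have e5 : q ≠ q + q ^ 2 := by omega
  have e6 : q ≠ 1 + q + q ^ 2 := by omega
  have e7 : ¬ (q = 1 + q) := by omega
  simp [fE, Ee, Ye, Fin.sum_univ_three, zero_pow, hq0, hq20,
    coeff_X_pow, coeff_X, coeff_C, coeff_one, e1, e3, e4, e5, e6, e7]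

lemma coeff_g_q1 (hq2 : 2 ≤ q) : coeff (q+1) (fE q b 0) = b 1 1 2 := by
  have hq0 : q ≠ 0 := by omega
  have hq20 : q ^ 2 ≠ 0 := by positivity
  have hqq : q + 2 ≤ q ^ 2 := by nlinarith
  have e0 : q + 1 ≠ 0 := by omega
  have e1 : q + 1 ≠ 1 := by omega
  have e2 : ¬ (q + 1 = q) := by omega
  have e3 : q + 1 ≠ q ^ 2 := by omega
  have e4 : q + 1 ≠ 1 + q ^ 2 := by omega
  have e5 : q + 1 ≠ q + q ^ 2 := by omega
  have e6 : q + 1 ≠ 1 + q + q ^ 2 := by omega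
  have e8 : ¬ (1 = q ^ 2) := by omega
  have e7 : q + 1 = 1 + q := by omega
  have e9 : q ≠ q ^ 2 := by omega
  have e10 : ¬ (1 + q = q + q ^ 2) := by omega
  have e11 : ¬ (1 + q = q ^ 2) := by omega
  simp [fE, Ee, Ye, Fin.sum_univ_three, zero_pow, hq0, hq20,
    coeff_X_pow, coeff_X, coeff_C, coeff_one, e0, e1, e2, e3, e4, e5, e6, e8, e7, e9, e10, e11]

/-- The iteration map. -/
noncomputable def Tmap (q : ℕ) (b : Fin 3 → Fin 3 → Fin 3 → k) (ψ : PowerSeries k) :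
    PowerSeries k := ψ - fE q b ψ

noncomputable def seq (q : ℕ) (b : Fin 3 → Fin 3 → Fin 3 → k) (n : ℕ) : PowerSeries k :=
  (Tmap q b)^[n] 0

lemma seq_succ (n : ℕ) : seq q b (n+1) = Tmap q b (seq q b n) := by
  simp [seq, Function.iterate_succ_apply']

lemma cc_seq (hq2 : 2 ≤ q) (h222 : b 2 2 2 = 0) (n : ℕ) :
    constantCoeff (seq q b n) = 0 := by
  induction n with
  | zero => simp [seq]
  | succ n ih =>
    rw [seq_succ, Tmap, map_sub, ih, cc_fE hq2 h222 _ ih, sub_zero]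

lemma X_dvd_seq (hq2 : 2 ≤ q) (h222 : b 2 2 2 = 0) (n : ℕ) : X ∣ seq q b n :=
  X_dvd_iff.mpr (cc_seq hq2 h222 n)

lemma seq_step (hq2 : 2 ≤ q) (hgood : Good q b) (h222 : b 2 2 2 = 0) (n : ℕ) :
    X ^ n ∣ seq q b (n+1) - seq q b n := by
  induction n with
  | zero => rw [pow_zero]; exact one_dvd _
  | succ n ih =>
    have main := (dvd_neg).mpr (lip hq2 hgood _ _ (X_dvd_seq hq2 h222 (n+1))
      (X_dvd_seq hq2 h222 n) n ih)
    have e : seq q b (n+1+1) - seq q b (n+1) =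
        -(fE q b (seq q b (n+1)) - fE q b (seq q b n) - (seq q b (n+1) - seq q b n)) := by
      rw [seq_succ (n+1), seq_succ n]
      simp only [Tmap]
      ring
    rw [e]
    exact main

lemma seq_chain (hq2 : 2 ≤ q) (hgood : Good q b) (h222 : b 2 2 2 = 0) (M N : ℕ)
    (h : M ≤ N) : X ^ M ∣ seq q b N - seq q b M := by
  induction N, h using Nat.le_induction with
  | base => simp
  | succ N hMN ih =>
    have h1 : X ^ M ∣ seq q b (N+1) - seq q b N :=
      dvd_trans (pow_dvd_pow X hMN) (seq_step hq2 hgood h222 N)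
    have e : seq q b (N+1) - seq q b M =
        (seq q b (N+1) - seq q b N) + (seq q b N - seq q b M) := by ring
    rw [e]
    exact dvd_add h1 ih

/-- The solution power series. -/
noncomputable def sol (q : ℕ) (b : Fin 3 → Fin 3 → Fin 3 → k) : PowerSeries k :=
  PowerSeries.mk fun j => coeff j (seq q b (j+1))

lemma sol_approx (hq2 : 2 ≤ q) (hgood : Good q b) (h222 : b 2 2 2 = 0) (N : ℕ) :
    X ^ N ∣ sol q b - seq q b N := by
  rw [X_pow_dvd_iff]
  intro j hj
  have hc : coeff j (seq q b N) = coeff j (seq q b (j+1)) := by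
    have hd := seq_chain hq2 hgood h222 (j+1) N hj
    have h2 := X_pow_dvd_iff.mp hd j (Nat.lt_succ_self j)
    rw [map_sub, sub_eq_zero] at h2
    exact h2
  rw [map_sub, hc]
  simp [sol]

lemma cc_sol (hq2 : 2 ≤ q) (h222 : b 2 2 2 = 0) :
    constantCoeff (sol q b) = 0 := by
  rw [← coeff_zero_eq_constantCoeff]
  have : coeff 0 (sol q b) = coeff 0 (seq q b 1) := by simp [sol]
  rw [this, coeff_zero_eq_constantCoeff]
  exact cc_seq hq2 h222 1

lemma X_dvd_sol (hq2 : 2 ≤ q) (h222 : b 2 2 2 = 0) : X ∣ sol q b :=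
  X_dvd_iff.mpr (cc_sol hq2 h222)

lemma eq_zero_of_forall_dvd (ψ : PowerSeries k) (h : ∀ n : ℕ, X ^ n ∣ ψ) : ψ = 0 := by
  ext n
  simpa using X_pow_dvd_iff.mp (h (n+1)) n (Nat.lt_succ_self n)

lemma sol_root (hq2 : 2 ≤ q) (hgood : Good q b) (h222 : b 2 2 2 = 0) :
    fE q b (sol q b) = 0 := by
  refine eq_zero_of_forall_dvd _ fun n => ?_
  refine dvd_trans (pow_dvd_pow X (Nat.le_succ n)) ?_
  have h1 : X ^ (n+1) ∣ sol q b - seq q b (n+1) := sol_approx hq2 hgood h222 (n+1)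
  have hd : X ^ n ∣ seq q b n - sol q b := by
    have := sol_approx hq2 hgood h222 n
    rw [show seq q b n - sol q b = -(sol q b - seq q b n) by ring]
    exact dvd_neg.mpr this
  have h2 := lip hq2 hgood _ _ (X_dvd_seq hq2 h222 n) (X_dvd_sol hq2 h222) n hd
  have e : fE q b (sol q b) =
      (sol q b - seq q b (n+1)) +
        ((seq q b n - sol q b) - (fE q b (seq q b n) - fE q b (sol q b))) := by
    rw [seq_succ n]
    simp only [Tmap]
    ring
  rw [e]
  refine dvd_add h1 ?_
  rw [show (seq q b n - sol q b) - (fE q b (seq q b n) - fE q b (sol q b)) =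
    -(fE q b (seq q b n) - fE q b (sol q b) - (seq q b n - sol q b)) from by ring]
  exact dvd_neg.mpr h2

lemma sol_unique (hq2 : 2 ≤ q) (hgood : Good q b) (h222 : b 2 2 2 = 0)
    (ψ : PowerSeries k) (hcc : constantCoeff ψ = 0) (hroot : fE q b ψ = 0) :
    ψ = sol q b := by
  have hψX : X ∣ ψ := X_dvd_iff.mpr hcc
  have key : ∀ n : ℕ, X ^ n ∣ ψ - sol q b := by
    intro n
    induction n with
    | zero => rw [pow_zero]; exact one_dvd _
    | succ n ih =>
      have h2 := lip hq2 hgood _ _ hψX (X_dvd_sol hq2 h222) n ih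
      rw [hroot, sol_root hq2 hgood h222] at h2
      rw [show (0 : PowerSeries k) - 0 - (ψ - sol q b) = -(ψ - sol q b) from by ring] at h2
      exact dvd_neg.mp h2
  have := eq_zero_of_forall_dvd _ key
  exact sub_eq_zero.mp this

lemma X_pow_q_dvd_sol (hq2 : 2 ≤ q) (hgood : Good q b) (h222 : b 2 2 2 = 0)
    (h122 : b 1 2 2 = 0) : X ^ q ∣ sol q b := by
  suffices h : ∀ c, c ≤ q → X ^ c ∣ sol q b from h q le_rfl
  intro c
  induction c with
  | zero => intro _; rw [pow_zero]; exact one_dvd _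
  | succ c ih =>
    intro hc
    have ihc := ih (by omega)
    have hlip := lip hq2 hgood (sol q b) 0 (X_dvd_sol hq2 h222) (dvd_zero X) c
      (by simpa using ihc)
    have hg : X ^ q ∣ fE q b 0 :=
      X_pow_dvd_iff.mpr fun m hm => coeff_g_lt hq2 h222 h122 m hm
    have hg' : X ^ (c+1) ∣ fE q b 0 := dvd_trans (pow_dvd_pow X hc) hg
    have e : sol q b = -(fE q b 0) - (fE q b (sol q b) - fE q b 0 - (sol q b - 0)) := by
      rw [sol_root hq2 hgood h222]; ring
    rw [e]
    exact dvd_sub (dvd_neg.mpr hg') hlip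

lemma coeff_sol_q (hq2 : 2 ≤ q) (hgood : Good q b) (h222 : b 2 2 2 = 0)
    (h122 : b 1 2 2 = 0) : coeff q (sol q b) = -(b 2 1 2) := by
  have hD := tail hq2 hgood _ (X_pow_q_dvd_sol hq2 hgood h222 h122)
  have e : sol q b = -(fE q b 0) - (fE q b (sol q b) - sol q b - fE q b 0) := by
    rw [sol_root hq2 hgood h222]; ring
  rw [e, map_sub, map_neg, coeff_g_q hq2,
    X_pow_dvd_iff.mp hD q (by omega), sub_zero]

lemma coeff_sol_q1 (hq2 : 2 ≤ q) (hgood : Good q b) (h222 : b 2 2 2 = 0)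
    (h122 : b 1 2 2 = 0) : coeff (q+1) (sol q b) = -(b 1 1 2) := by
  have hD := tail hq2 hgood _ (X_pow_q_dvd_sol hq2 hgood h222 h122)
  have e : sol q b = -(fE q b 0) - (fE q b (sol q b) - sol q b - fE q b 0) := by
    rw [sol_root hq2 hgood h222]; ring
  rw [e, map_sub, map_neg, coeff_g_q1 hq2,
    X_pow_dvd_iff.mp hD (q+1) (by omega), sub_zero]

def bOf (a : Fin 3 → Fin 3 → Fin 3 → k) : Fin 3 → Fin 3 → Fin 3 → k :=
  fun i j m => if i = 0 ∧ j = 2 ∧ m = 2 then 0 else a i j m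

lemma good_bOf (hq2 : 2 ≤ q) (a : Fin 3 → Fin 3 → Fin 3 → k) : Good q (bOf a) := by
  have hqq : q + 2 ≤ q ^ 2 := by nlinarith
  have key : ∀ E Y : ℕ, 1 ≤ E → (q ≤ E ∨ q ≤ Y) → q + q ≤ q * E + Y := by
    intro E Y hE h
    rcases h with h | h
    · have h1 : 2 * q ≤ q * q := by nlinarith
      have h2 : q * q ≤ q * E := Nat.mul_le_mul_left q h
      linarith
    · have h1 : q * 1 ≤ q * E := Nat.mul_le_mul_left q hE
      linarith
  intro i j m
  fin_cases i <;> fin_cases j <;> fin_cases m <;>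
    first
      | (refine Or.inl ?_; simp [bOf]; done)
      | (refine Or.inr (Or.inl ?_); simp [Ee]; done)
      | (refine Or.inr (Or.inr ⟨?_, key _ _ ?_ ?_⟩) <;> (simp [Ee, Ye]; try omega))

lemma aeval_eq {a : Fin 3 → Fin 3 → Fin 3 → k} (h022 : a 0 2 2 = 1) (x : PowerSeries k) :
    MvPolynomial.aeval ![x, X, 1] (∑ i : Fin 3, ∑ j : Fin 3, ∑ m : Fin 3,
        MvPolynomial.C (a i j m) * MvPolynomial.X i * MvPolynomial.X j ^ q *
          MvPolynomial.X m ^ (q ^ 2)) = fE q (bOf a) x := by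
  simp only [map_sum, map_mul, map_pow, MvPolynomial.aeval_C, MvPolynomial.aeval_X]
  have step : ∀ i j m : Fin 3,
      (algebraMap k (PowerSeries k)) (a i j m) * (![x, X, 1] i) * (![x, X, 1] j) ^ q *
          (![x, X, 1] m) ^ (q ^ 2) =
        PowerSeries.C (bOf a i j m) * x ^ (Ee q i j m) * X ^ (Ye q i j m) +
          (if i = 0 ∧ j = 2 ∧ m = 2 then x else 0) := by
    intro i j m
    have halg : ∀ c : k, (algebraMap k (PowerSeries k)) c = PowerSeries.C c := fun c => rfl
    fin_cases i <;> fin_cases j <;> fin_cases m <;>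
      simp [bOf, Ee, Ye, h022, halg] <;> ring
  simp only [step, Finset.sum_add_distrib]
  rw [fE, add_comm]
  congr 1
  simp [Fin.sum_univ_three]

end LocParam

open MvPolynomial

/-- Let `F = Σ aᵢⱼₖ xᵢ xⱼ^q xₖ^(q²)` over a field of characteristic `p` (`q` a power of
`p`) with `a₂₂₂ = 0`, `a₁₂₂ = 0` and `a₀₂₂ = 1`, so that `f(x,y) = F(x,y,1)` has the
normalized form `x + a₂₀₂x^q + a₂₁₂y^q + ⋯`. Then there is a unique formal power series
`φ(t)` with `φ(0) = 0` and `f(φ(t), t) = 0` (a local parametrization `x = φ(t)`, `y = t`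
of the curve at `P₀ = [0:0:1]`); moreover `φ(t) = -a₂₁₂ t^q - a₁₁₂ t^(q+1) + ⋯`, i.e.
the coefficients of `t^j` vanish for `1 ≤ j ≤ q-1`, the coefficient of `t^q` is `-a₂₁₂`
and that of `t^(q+1)` is `-a₁₁₂`. -/
theorem local_parametrization_at_tangent_point
    {k : Type*} [Field k] (p ν q : ℕ) (hp : p.Prime) [CharP k p]
    (hν : 1 ≤ ν) (hq : q = p ^ ν)
    (a : Fin 3 → Fin 3 → Fin 3 → k)
    (h222 : a 2 2 2 = 0) (h122 : a 1 2 2 = 0) (h022 : a 0 2 2 = 1)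
    (F : MvPolynomial (Fin 3) k)
    (hF : F = ∑ i : Fin 3, ∑ j : Fin 3, ∑ m : Fin 3,
        C (a i j m) * X i * X j ^ q * X m ^ (q ^ 2)) :
    ∃ φ : PowerSeries k,
      (PowerSeries.coeff 0 φ = 0 ∧ aeval ![φ, PowerSeries.X, 1] F = 0) ∧
      (∀ ψ : PowerSeries k,
          PowerSeries.coeff 0 ψ = 0 → aeval ![ψ, PowerSeries.X, 1] F = 0 → ψ = φ) ∧
      (∀ j : ℕ, 1 ≤ j → j ≤ q - 1 → PowerSeries.coeff j φ = 0) ∧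
      PowerSeries.coeff q φ = -(a 2 1 2) ∧
      PowerSeries.coeff (q + 1) φ = -(a 1 1 2) := by
  have hq2 : 2 ≤ q := by
    rw [hq]
    calc 2 ≤ p := hp.two_le
    _ ≤ p ^ ν := Nat.le_self_pow (by omega) p
  set b : Fin 3 → Fin 3 → Fin 3 → k := LocParam.bOf a with hb
  have h222' : b 2 2 2 = 0 := by simp [hb, LocParam.bOf, h222]
  have h122' : b 1 2 2 = 0 := by simp [hb, LocParam.bOf, h122]
  have hgood : LocParam.Good q b := LocParam.good_bOf hq2 a
  refine ⟨LocParam.sol q b, ⟨?_, ?_⟩, ?_, ?_, ?_, ?_⟩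
  · rw [PowerSeries.coeff_zero_eq_constantCoeff]
    exact LocParam.cc_sol hq2 h222'
  · rw [hF, LocParam.aeval_eq h022, ← hb, LocParam.sol_root hq2 hgood h222']
  · intro ψ hψ hroot
    rw [hF, LocParam.aeval_eq h022, ← hb] at hroot
    exact LocParam.sol_unique hq2 hgood h222' ψ
      (by rwa [← PowerSeries.coeff_zero_eq_constantCoeff]) hroot
  · intro j hj1 hj2
    exact PowerSeries.X_pow_dvd_iff.mp
      (LocParam.X_pow_q_dvd_sol hq2 hgood h222' h122') j (by omega)
  · rw [LocParam.coeff_sol_q hq2 hgood h222' h122']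
    simp [hb, LocParam.bOf]
  · rw [LocParam.coeff_sol_q1 hq2 hgood h222' h122']
    simp [hb, LocParam.bOf]
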